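/- Given a 3-PARTITION instance (x_1,…,x_{3n}; B), let k = 4B, n' = 4n(k+1), and construct the following discrete instance with m = n(B+1) + 4nk² items and n' agents: from left to right the items consist of n consecutive blocks of B+1 items each — in each block the leftmost item is 'special' and the remaining B items are 'normal' — followed by 4nk² 'dummy' items; the agents are n special agents, the j-th of which values exactly the j-th special item, 4nk dummy agents, each of which values exactly the set of all dummy items, and 3n normal agents, the i-th of which values exactly the leftmost n'·x_i items. Then this instance admits a contiguous proportional allocation if and only if the 3-PARTITION instance has a solution. -/

import Mathlib

/-- `owner` is a contiguous allocation of the items `Fin M` (items numbered from left to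
right) to the agents of type `A`: each agent's set of items is a (possibly empty) set of
consecutive items. -/
def ContigAlloc {M : ℕ} {A : Type*} (owner : Fin M → A) : Prop :=
  ∀ (a : A) (t₁ t₂ t₃ : Fin M), t₁ ≤ t₂ → t₂ ≤ t₃ →
    owner t₁ = a → owner t₃ = a → owner t₂ = a

open Classical in
/-- The (normalized) value that agent `a` assigns to the bundle received by agent `b`
under the allocation `owner`, where `V a` is the set of items valued by agent `a`:
`|A_b ∩ V_a| / |V_a|`. -/
noncomputable def discVal {M : ℕ} {A : Type*} (V : A → Finset (Fin M))
    (owner : Fin M → A) (a b : A) : ℝ :=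
  (((V a).filter fun t => owner t = b).card : ℝ) / ((V a).card : ℝ)

/-- The valued sets of the discrete instance built from a 3-PARTITION instance
`(x, B)`: with `k = 4B` and `n' = 4n(k+1)`, the items are `n` blocks of `B+1` items
(a special item followed by `B` normal items) followed by `4nk²` dummy items; the `j`-th
special agent (`Sum.inl`) values exactly the `j`-th special item, each dummy agent
(`Sum.inr (Sum.inl _)`) values exactly the dummy items, and the `i`-th normal agent
(`Sum.inr (Sum.inr i)`) values exactly the leftmost `n' * x i` items. -/
def partitionV (n B : ℕ) (x : Fin (3 * n) → ℕ) :
    (Fin n ⊕ Fin (4 * n * (4 * B)) ⊕ Fin (3 * n)) →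
      Finset (Fin (n * (B + 1) + 4 * n * (4 * B) ^ 2))
  | .inl s => Finset.univ.filter fun j => j.val = s.val * (B + 1)
  | .inr (.inl _) => Finset.univ.filter fun j => n * (B + 1) ≤ j.val
  | .inr (.inr i) => Finset.univ.filter fun j => j.val < 4 * n * (4 * B + 1) * x i

open Finset

/-! ### Generic counting helpers -/

lemma aux_card_filter_val {M : ℕ} (p : ℕ → Prop) [DecidablePred p] :
    ((univ : Finset (Fin M)).filter fun j => p j.val).card
      = ((range M).filter p).card := by
  apply Finset.card_bij (fun j _ => j.val)
  · intro a ha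
    simp only [mem_filter, mem_univ, true_and] at ha
    simp only [mem_filter, mem_range]
    exact ⟨a.isLt, ha⟩
  · intro a _ b _ h; exact Fin.ext h
  · intro b hb
    simp only [mem_filter, mem_range] at hb
    exact ⟨⟨b, hb.1⟩, by simp only [mem_filter, mem_univ, true_and]; exact hb.2, rfl⟩

lemma aux_card_range_Ico (M a b : ℕ) (hb : b ≤ M) :
    ((Finset.range M).filter fun v => a ≤ v ∧ v < b).card = b - a := by
  have h : ((Finset.range M).filter fun v => a ≤ v ∧ v < b)
      = (Finset.range (b - a)).image (a + ·) := by
    ext v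
    simp only [mem_filter, mem_range, mem_image]
    constructor
    · rintro ⟨h1, h2, h3⟩; exact ⟨v - a, by omega, by omega⟩
    · rintro ⟨w, hw, rfl⟩; omega
  rw [h, Finset.card_image_of_injective _ (add_right_injective a), Finset.card_range]

/-! ### Prefix sums within blocks -/

def lowf {n : ℕ} (x : Fin (3*n) → ℕ) (p : Fin (3*n) → Fin n) (i : Fin (3*n)) : ℕ :=
  ∑ i' ∈ univ.filter (fun i' => p i' = p i ∧ i' < i), x i'

section
variable {n B : ℕ} {x : Fin (3*n) → ℕ} {p : Fin (3*n) → Fin n}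

lemma aux_lowf_eq (i : Fin (3*n)) :
    lowf x p i = ∑ i' ∈ (univ.filter (fun i' => p i' = p i)).filter (· < i), x i' := by
  unfold lowf; congr 1; ext i'; simp [and_assoc]

lemma aux_cumf_eq (i : Fin (3*n)) :
    lowf x p i + x i = ∑ i' ∈ (univ.filter (fun i' => p i' = p i)).filter (· ≤ i), x i' := by
  rw [aux_lowf_eq]
  have h : (univ.filter (fun i' => p i' = p i)).filter (· ≤ i)
      = insert i ((univ.filter (fun i' => p i' = p i)).filter (· < i)) := by
    ext j
    simp only [mem_insert, mem_filter, mem_univ, true_and]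
    constructor
    · rintro ⟨hj, hle⟩
      rcases lt_or_eq_of_le hle with h|h
      · exact Or.inr ⟨hj, h⟩
      · exact Or.inl (by exact Fin.ext (congrArg Fin.val h))
    · rintro (rfl|⟨hj, hlt⟩)
      · exact ⟨rfl, le_refl _⟩
      · exact ⟨hj, le_of_lt hlt⟩
  rw [h, sum_insert (by simp), add_comm]

lemma aux_cum_le (hsum3 : ∀ t, ∑ i ∈ univ.filter (fun i => p i = t), x i = B)
    (i : Fin (3*n)) : lowf x p i + x i ≤ B := by
  rw [aux_cumf_eq, ← hsum3 (p i)]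
  exact sum_le_sum_of_subset (filter_subset _ _)

lemma aux_exu (hsum3 : ∀ t, ∑ i ∈ univ.filter (fun i => p i = t), x i = B)
    (t : Fin n) (r : ℕ) (h1 : 1 ≤ r) (hr : r ≤ B) :
    ∃! i : Fin (3*n), p i = t ∧ lowf x p i < r ∧ r ≤ lowf x p i + x i := by
  classical
  set T := univ.filter (fun i => p i = t) with hT
  have hmemT : ∀ i, i ∈ T ↔ p i = t := by intro i; simp [hT]
  have hsumT : ∑ i ∈ T, x i = B := hsum3 t
  have hlow : ∀ i ∈ T, lowf x p i = ∑ i' ∈ T.filter (· < i), x i' := by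
    intro i hi
    rw [aux_lowf_eq, (hmemT i).mp hi]
  have hcum : ∀ i ∈ T, lowf x p i + x i = ∑ i' ∈ T.filter (· ≤ i), x i' := by
    intro i hi
    rw [aux_cumf_eq, (hmemT i).mp hi]
  have hTne : T.Nonempty := by
    by_contra h
    rw [not_nonempty_iff_eq_empty] at h
    rw [h, sum_empty] at hsumT; omega
  have hi₀T : T.max' hTne ∈ T := T.max'_mem hTne
  have hcum₀ : lowf x p (T.max' hTne) + x (T.max' hTne) = B := by
    rw [hcum _ hi₀T, ← hsumT]
    congr 1
    exact filter_true_of_mem (fun j hj => T.le_max' j hj)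
  set C := T.filter (fun i => r ≤ lowf x p i + x i) with hC
  have hCne : C.Nonempty := ⟨T.max' hTne, mem_filter.mpr ⟨hi₀T, by omega⟩⟩
  set im := C.min' hCne with him
  have himC : im ∈ C := C.min'_mem hCne
  have himT : im ∈ T := (mem_filter.mp himC).1
  have hrcum : r ≤ lowf x p im + x im := (mem_filter.mp himC).2
  have hlowlt : lowf x p im < r := by
    by_contra hge
    push_neg at hge
    have hSne : (T.filter (· < im)).Nonempty := by
      by_contra h
      rw [not_nonempty_iff_eq_empty] at h
      rw [hlow im himT, h, sum_empty] at hge; omega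
    set j := (T.filter (· < im)).max' hSne with hj
    have hjmem : j ∈ T.filter (· < im) := (T.filter (· < im)).max'_mem hSne
    have hjT : j ∈ T := (mem_filter.mp hjmem).1
    have hjlt : j < im := (mem_filter.mp hjmem).2
    have hkey : lowf x p j + x j = lowf x p im := by
      rw [hcum j hjT, hlow im himT]
      congr 1
      ext u
      simp only [mem_filter]
      constructor
      · rintro ⟨hu, hule⟩; exact ⟨hu, lt_of_le_of_lt hule hjlt⟩
      · rintro ⟨hu, hult⟩
        exact ⟨hu, (T.filter (· < im)).le_max' u (mem_filter.mpr ⟨hu, hult⟩)⟩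
    have hjC : j ∈ C := mem_filter.mpr ⟨hjT, by omega⟩
    exact absurd (C.min'_le j hjC) (not_le.mpr hjlt)
  have hkey2 : ∀ a b : Fin (3*n), a ∈ T → b ∈ T → a < b →
      lowf x p a + x a ≤ lowf x p b := by
    intro a b haT hbT hab
    rw [hcum a haT, hlow b hbT]
    apply sum_le_sum_of_subset
    intro u hu
    simp only [mem_filter] at hu ⊢
    exact ⟨hu.1, lt_of_le_of_lt hu.2 hab⟩
  refine ⟨im, ⟨(hmemT im).mp himT, hlowlt, hrcum⟩, ?_⟩
  rintro y ⟨hyt, hyl, hyu⟩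
  have hyT : y ∈ T := (hmemT y).mpr hyt
  by_contra hne
  rcases lt_trichotomy y im with h|h|h
  · have := hkey2 y im hyT himT h; omega
  · exact hne h
  · have := hkey2 im y himT hyT h; omega

end

/-! ### The constructed allocation -/

def mkOwner (n B : ℕ) (x : Fin (3*n) → ℕ) (p : Fin (3*n) → Fin n) (hB : 0 < B)
    (hex : ∀ (t : Fin n) (r : ℕ), 1 ≤ r → r ≤ B →
      ∃! i : Fin (3*n), p i = t ∧ lowf x p i < r ∧ r ≤ lowf x p i + x i) :
    Fin (n*(B+1) + 4*n*(4*B)^2) → (Fin n ⊕ Fin (4*n*(4*B)) ⊕ Fin (3*n)) :=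
  fun j =>
    if h1 : j.val < n*(B+1) then
      if h0 : j.val % (B+1) = 0 then
        .inl ⟨j.val / (B+1), by rwa [Nat.div_lt_iff_lt_mul (by omega)]⟩
      else
        .inr (.inr (Fintype.choose _ (hex ⟨j.val/(B+1), by rwa [Nat.div_lt_iff_lt_mul (by omega)]⟩
          (j.val % (B+1)) (by omega)
          (by have := Nat.mod_lt j.val (y := B+1) (by omega); omega))))
    else
      .inr (.inl ⟨(j.val - n*(B+1)) / (4*B), by
        rw [Nat.div_lt_iff_lt_mul (by omega)]
        have hj := j.isLt
        have hQ : n*(B+1) + 4*n*(4*B)^2 = n*(B+1) + 4*n*(4*B)*(4*B) := by ring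
        omega⟩)

section
variable {n B : ℕ} {x : Fin (3*n) → ℕ} {p : Fin (3*n) → Fin n} {hB : 0 < B}
  {hex : ∀ (t : Fin n) (r : ℕ), 1 ≤ r → r ≤ B →
      ∃! i : Fin (3*n), p i = t ∧ lowf x p i < r ∧ r ≤ lowf x p i + x i}

lemma mkOwner_eq_inl (j : Fin (n*(B+1) + 4*n*(4*B)^2)) (s : Fin n) :
    mkOwner n B x p hB hex j = .inl s ↔ j.val = s.val * (B+1) := by
  have hpin : (s.val + 1) * (B+1) ≤ n * (B+1) := Nat.mul_le_mul_right _ s.isLt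
  have hpin' : (s.val + 1) * (B+1) = s.val * (B+1) + (B+1) := by ring
  unfold mkOwner
  split_ifs with h1 h0
  · constructor
    · intro h
      have hval : j.val / (B+1) = s.val := congrArg Fin.val (Sum.inl.inj h)
      have hdm := Nat.div_add_mod j.val (B+1)
      have hcomm : (B+1) * (j.val / (B+1)) = s.val * (B+1) := by rw [hval, mul_comm]
      omega
    · intro h
      congr 1
      apply Fin.ext
      show j.val / (B+1) = s.val
      rw [h, Nat.mul_div_cancel _ (by omega)]
  · rw [false_iff]
    intro h
    rw [h, Nat.mul_mod_left] at h0
    exact h0 rfl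
  · rw [false_iff]
    intro h
    omega

lemma mkOwner_eq_dummy (j : Fin (n*(B+1) + 4*n*(4*B)^2)) (d : Fin (4*n*(4*B))) :
    mkOwner n B x p hB hex j = .inr (.inl d) ↔
      n*(B+1) ≤ j.val ∧ (j.val - n*(B+1)) / (4*B) = d.val := by
  unfold mkOwner
  split_ifs with h1 h0
  · refine iff_of_false (by simp) ?_; rintro ⟨h, -⟩; omega
  · refine iff_of_false (by simp) ?_; rintro ⟨h, -⟩; omega
  · simp only [Sum.inr.injEq, Sum.inl.injEq, Fin.ext_iff]
    constructor
    · intro h; exact ⟨by omega, h⟩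
    · rintro ⟨-, h⟩; exact h

lemma mkOwner_eq_norm (hsum3 : ∀ t, ∑ i ∈ univ.filter (fun i => p i = t), x i = B)
    (j : Fin (n*(B+1) + 4*n*(4*B)^2)) (i : Fin (3*n)) :
    mkOwner n B x p hB hex j = .inr (.inr i) ↔
      (p i).val * (B+1) + 1 + lowf x p i ≤ j.val ∧
        j.val ≤ (p i).val * (B+1) + (lowf x p i + x i) := by
  have hcumB : lowf x p i + x i ≤ B := aux_cum_le hsum3 i
  have hpin : ((p i).val + 1) * (B+1) ≤ n * (B+1) := Nat.mul_le_mul_right _ (p i).isLt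
  have hpin' : ((p i).val + 1) * (B+1) = (p i).val * (B+1) + (B+1) := by ring
  unfold mkOwner
  split_ifs with h1 h0
  · -- special-item branch : both sides false
    rw [false_iff]
    rintro ⟨hL, hR⟩
    have hdiv : j.val / (B+1) = (p i).val :=
      Nat.div_eq_of_lt_le (by omega) (by omega)
    have hdm := Nat.div_add_mod j.val (B+1)
    have hcomm : (B+1) * (j.val / (B+1)) = (p i).val * (B+1) := by rw [hdiv, mul_comm]
    omega
  · -- choose branch
    have hrle : j.val % (B+1) ≤ B := by
      have := Nat.mod_lt j.val (y := B+1) (by omega); omega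
    have key : ∀ c : Fin (3*n),
        (p c = (⟨j.val/(B+1), by rwa [Nat.div_lt_iff_lt_mul (by omega)]⟩ : Fin n) ∧
          lowf x p c < j.val % (B+1) ∧ j.val % (B+1) ≤ lowf x p c + x c) →
        ((Sum.inr (Sum.inr c) : Fin n ⊕ Fin (4*n*(4*B)) ⊕ Fin (3*n)) = .inr (.inr i) ↔
          (p i).val * (B+1) + 1 + lowf x p i ≤ j.val ∧
            j.val ≤ (p i).val * (B+1) + (lowf x p i + x i)) := by
      rintro c ⟨hct, hcl, hcu⟩
      have hdm := Nat.div_add_mod j.val (B+1)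
      simp only [Sum.inr.injEq]
      constructor
      · rintro rfl
        have hceq : (p c).val = j.val / (B+1) := congrArg Fin.val hct
        have hcomm : (B+1) * (j.val / (B+1)) = (p c).val * (B+1) := by rw [hceq, mul_comm]
        omega
      · rintro ⟨hL, hR⟩
        have hdiv : j.val / (B+1) = (p i).val :=
          Nat.div_eq_of_lt_le (by omega) (by omega)
        have hcomm : (B+1) * (j.val / (B+1)) = (p i).val * (B+1) := by rw [hdiv, mul_comm]
        refine (hex _ _ (by omega) hrle).unique ⟨hct, hcl, hcu⟩
          ⟨Fin.ext (by simpa using hdiv.symm), by omega, by omega⟩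
    exact key _ (Fintype.choose_spec _ (hex ⟨j.val/(B+1), by rwa [Nat.div_lt_iff_lt_mul (by omega)]⟩
          (j.val % (B+1)) (by omega)
          (by have := Nat.mod_lt j.val (y := B+1) (by omega); omega)))
  · -- dummy branch : both sides false
    refine iff_of_false (by simp) ?_
    rintro ⟨hL, hR⟩
    omega

end

/-! ### More counting helpers -/

lemma aux_card_eq' {M : ℕ} (s : Finset (Fin M)) (a b : ℕ)
    (h : ∀ j : Fin M, j ∈ s ↔ (a ≤ j.val ∧ j.val < b)) (hb : b ≤ M) :
    s.card = b - a := by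
  rw [← Finset.card_range (b - a)]
  apply Finset.card_bij (fun j _ => j.val - a)
  · intro j hj
    rw [h j] at hj
    rw [Finset.mem_range]
    omega
  · intro j₁ hj₁ j₂ hj₂ he
    rw [h j₁] at hj₁
    rw [h j₂] at hj₂
    apply Fin.ext
    omega
  · intro k hk
    rw [Finset.mem_range] at hk
    refine ⟨⟨a + k, by omega⟩, ?_, by simp⟩
    rw [h ⟨a + k, by omega⟩]
    simp
    omega

open Classical in
noncomputable def cntf {M : ℕ} {A : Type*} (o : Fin M → A) (a : A) (P : ℕ → Prop) : ℕ :=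
  (Finset.univ.filter fun j => o j = a ∧ P j.val).card

section cntf
variable {M : ℕ} {A : Type*}

lemma cntf_filter (o : Fin M → A) (a : A) (P : ℕ → Prop)
    [DecidablePred P] [DecidablePred fun t : Fin M => o t = a] :
    (((Finset.univ : Finset (Fin M)).filter (fun j => P j.val)).filter
      (fun t => o t = a)).card = cntf o a P := by
  unfold cntf
  congr 1
  ext j
  simp only [Finset.mem_filter, Finset.mem_univ, true_and]
  tauto

open Classical in
lemma cntf_sum [Fintype A] (o : Fin M → A) (P : ℕ → Prop) :
    ∑ a : A, cntf o a P
      = ((Finset.univ : Finset (Fin M)).filter fun j => P j.val).card := by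
  rw [Finset.card_eq_sum_card_fiberwise (f := o) (t := Finset.univ)
    (fun _ _ => Finset.mem_univ _)]
  exact Finset.sum_congr rfl (fun b _ => (cntf_filter o b P).symm)

lemma cntf_mono (o : Fin M → A) (a : A) {P Q : ℕ → Prop} (h : ∀ v, P v → Q v) :
    cntf o a P ≤ cntf o a Q := by
  classical
  unfold cntf
  apply Finset.card_le_card
  intro j hj
  simp only [Finset.mem_filter, Finset.mem_univ, true_and] at hj ⊢
  exact ⟨hj.1, h _ hj.2⟩

lemma cntf_split (o : Fin M → A) (a : A) {P Q R : ℕ → Prop}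
    (h : ∀ v, P v → Q v ∨ R v) :
    cntf o a P ≤ cntf o a Q + cntf o a R := by
  classical
  unfold cntf
  refine le_trans (Finset.card_le_card ?_) (Finset.card_union_le _ _)
  intro j hj
  simp only [Finset.mem_union, Finset.mem_filter, Finset.mem_univ, true_and] at hj ⊢
  rcases h _ hj.2 with h'|h'
  · exact Or.inl ⟨hj.1, h'⟩
  · exact Or.inr ⟨hj.1, h'⟩

lemma cntf_eq_zero_iff {o : Fin M → A} {a : A} {P : ℕ → Prop} :
    cntf o a P = 0 ↔ ∀ j : Fin M, o j = a → ¬ P j.val := by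
  classical
  unfold cntf
  rw [Finset.card_eq_zero, Finset.filter_eq_empty_iff]
  constructor
  · intro h j h1 h2; exact h (Finset.mem_univ j) ⟨h1, h2⟩
  · intro h j _; rintro ⟨h1, h2⟩; exact h j h1 h2

lemma cntf_pos_of {o : Fin M → A} {a : A} {P : ℕ → Prop} (j : Fin M)
    (h1 : o j = a) (h2 : P j.val) : 0 < cntf o a P := by
  classical
  unfold cntf
  exact Finset.card_pos.mpr ⟨j, (by simp only [Finset.mem_filter, Finset.mem_univ, true_and]; exact ⟨h1, h2⟩)⟩

lemma exists_of_cntf_pos {o : Fin M → A} {a : A} {P : ℕ → Prop}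
    (h : 0 < cntf o a P) : ∃ j : Fin M, o j = a ∧ P j.val := by
  classical
  unfold cntf at h
  obtain ⟨j, hj⟩ := Finset.card_pos.mp h
  simp only [Finset.mem_filter, Finset.mem_univ, true_and] at hj
  exact ⟨j, hj⟩

lemma cntf_unique {o : Fin M → A} {a : A} {P : ℕ → Prop} (h : cntf o a P ≤ 1)
    {j j' : Fin M} (h1 : o j = a) (h2 : P j.val) (h3 : o j' = a) (h4 : P j'.val) :
    j = j' := by
  classical
  unfold cntf at h
  exact Finset.card_le_one.mp h j
    (by simp only [Finset.mem_filter, Finset.mem_univ, true_and]; exact ⟨h1, h2⟩) j'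
    (by simp only [Finset.mem_filter, Finset.mem_univ, true_and]; exact ⟨h3, h4⟩)

end cntf

lemma aux_count_of_val {c1 c2 N : ℕ} (hc2 : 0 < c2) (hN : 0 < N)
    (h : 1/(N:ℝ) ≤ (c1:ℝ)/(c2:ℝ)) : c2 ≤ c1 * N := by
  rw [div_le_div_iff₀ (by exact_mod_cast hN) (by exact_mod_cast hc2)] at h
  have h2 : (c2 : ℝ) ≤ ((c1 * N : ℕ) : ℝ) := by push_cast; linarith
  exact_mod_cast h2

lemma aux_val_of_count {c1 c2 N : ℕ} (hc2 : 0 < c2) (hN : 0 < N)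
    (h : c2 ≤ c1 * N) : 1/(N:ℝ) ≤ (c1:ℝ)/(c2:ℝ) := by
  rw [div_le_div_iff₀ (by exact_mod_cast hN) (by exact_mod_cast hc2)]
  have h2 : (c2 : ℝ) ≤ ((c1 * N : ℕ) : ℝ) := by exact_mod_cast h
  push_cast at h2
  linarith

lemma aux_dummy_lb {n B c : ℕ} (hn : 0 < n) (hB : 0 < B)
    (h : 4*n*(4*B)^2 ≤ c * (4*n*(4*B)+4*n)) : 4*B ≤ c := by
  by_contra hlt
  push_neg at hlt
  have h2 : (c+1)*(4*n*(4*B)+4*n) ≤ (4*B)*(4*n*(4*B)+4*n) :=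
    Nat.mul_le_mul_right _ (by omega)
  have e1 : (4*B)*(4*n*(4*B)+4*n) = 64*(n*(B*B)) + 16*(n*B) := by ring
  have e2 : (c+1)*(4*n*(4*B)+4*n) = c*(4*n*(4*B)+4*n) + 16*(n*B) + 4*n := by ring
  have e3 : 4*n*(4*B)^2 = 64*(n*(B*B)) := by ring
  omega

lemma cntf_congr {M : ℕ} {A : Type*} (o : Fin M → A) (a : A) {P Q : ℕ → Prop}
    (h : ∀ j : Fin M, o j = a → (P j.val ↔ Q j.val)) : cntf o a P = cntf o a Q := by
  classical
  unfold cntf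
  congr 1
  ext j
  simp only [Finset.mem_filter, Finset.mem_univ, true_and]
  constructor
  · rintro ⟨h1, h2⟩; exact ⟨h1, (h j h1).mp h2⟩
  · rintro ⟨h1, h2⟩; exact ⟨h1, (h j h1).mpr h2⟩

open Classical in
lemma cntf_sum' {M : ℕ} {A : Type*} [Fintype A] (o : Fin M → A) (P : ℕ → Prop) (m : ℕ)
    (h : ∀ s : Finset (Fin M), (∀ j, j ∈ s ↔ P j.val) → s.card = m) :
    ∑ a : A, cntf o a P = m := by
  rw [cntf_sum]
  exact h _ (fun j => by simp)

lemma cntf_eq_card {M : ℕ} {A : Type*} (o : Fin M → A) (a : A) (P : ℕ → Prop)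
    (s : Finset (Fin M)) (h : ∀ j, j ∈ s ↔ (o j = a ∧ P j.val)) :
    s.card = cntf o a P := by
  classical
  unfold cntf
  congr 1
  ext j
  simp only [Finset.mem_filter, Finset.mem_univ, true_and]
  exact h j

open Classical in
lemma aux_prop_use {M : ℕ} {A : Type*} (V : A → Finset (Fin M)) (o : Fin M → A) (a : A)
    (c1 c2 N : ℕ)
    (h1 : ∀ s : Finset (Fin M), (∀ j, j ∈ s ↔ (j ∈ V a ∧ o j = a)) → s.card = c1)
    (h2 : (V a).card = c2) (hc2 : 0 < c2) (hN : 0 < N)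
    (h : 1/(N:ℝ) ≤ discVal V o a a) : c2 ≤ c1 * N := by
  unfold discVal at h
  rw [h1 _ (fun j => Finset.mem_filter), h2] at h
  exact aux_count_of_val hc2 hN h

open Classical in
lemma aux_prop_show {M : ℕ} {A : Type*} (V : A → Finset (Fin M)) (o : Fin M → A) (a : A)
    (c1 c2 : ℕ) (N : ℕ)
    (h1 : ∀ s : Finset (Fin M), (∀ j, j ∈ s ↔ (j ∈ V a ∧ o j = a)) → s.card = c1)
    (h2 : (V a).card = c2) (hc2 : 0 < c2) (hN : 0 < N) (h : c2 ≤ c1 * N) :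
    1/(N:ℝ) ≤ discVal V o a a := by
  unfold discVal
  rw [h1 _ (fun j => Finset.mem_filter), h2]
  exact aux_val_of_count hc2 hN h

/-- The discrete instance constructed from a 3-PARTITION instance
`(x; B)` admits a contiguous proportional allocation if and only if the 3-PARTITION
instance has a solution. -/
theorem contiguous_proportional_iff_three_partition
    (n B : ℕ) (hn : 0 < n) (x : Fin (3 * n) → ℕ)
    (hpos : ∀ i, 0 < x i) (hsum : ∑ i, x i = n * B)
    (hlb : ∀ i, B < 4 * x i) (hub : ∀ i, 2 * x i < B) :
    (∃ owner : Fin (n * (B + 1) + 4 * n * (4 * B) ^ 2) →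
        (Fin n ⊕ Fin (4 * n * (4 * B)) ⊕ Fin (3 * n)),
      ContigAlloc owner ∧
      ∀ a, discVal (partitionV n B x) owner a a ≥
        1 / (Fintype.card (Fin n ⊕ Fin (4 * n * (4 * B)) ⊕ Fin (3 * n)) : ℝ)) ↔
    (∃ p : Fin (3 * n) → Fin n, ∀ t : Fin n,
      (Finset.univ.filter fun i => p i = t).card = 3 ∧
      ∑ i ∈ Finset.univ.filter (fun i => p i = t), x i = B) := by
  classical
  have hB3 : 3 ≤ B := by
    have h1 := hpos ⟨0, by omega⟩
    have h2 := hub ⟨0, by omega⟩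
    omega
  have hB0 : 0 < B := by omega
  have hcard : Fintype.card (Fin n ⊕ Fin (4 * n * (4 * B)) ⊕ Fin (3 * n))
      = 4*n*(4*B) + 4*n := by
    simp only [Fintype.card_sum, Fintype.card_fin]
    omega
  have hN'pos : 0 < 4*n*(4*B) + 4*n := by omega
  have hMle : n*(B+1) ≤ n*(B+1) + 4*n*(4*B)^2 := Nat.le_add_right _ _
  have hsplan : ∀ s : Fin n, s.val*(B+1) + (B+1) ≤ n*(B+1) := by
    intro s
    have h2 : (s.val+1)*(B+1) ≤ n*(B+1) := Nat.mul_le_mul_right _ s.isLt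
    have e : (s.val+1)*(B+1) = s.val*(B+1)+(B+1) := by ring
    omega
  have hV2pos : 0 < 4*n*(4*B)^2 := by
    have e4 : 4*n*(4*B)^2 = 64*(n*(B*B)) := by ring
    have := Nat.mul_pos hn (Nat.mul_pos hB0 hB0)
    omega
  have hcardV1 : ∀ s : Fin n, (partitionV n B x (.inl s)).card = 1 := by
    intro s
    refine Eq.trans (aux_card_eq' (partitionV n B x (.inl s)) (s.val*(B+1))
      (s.val*(B+1)+1) (fun j => ?_) (by have := hsplan s; omega)) (by omega)
    simp only [partitionV, Finset.mem_filter, Finset.mem_univ, true_and]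
    omega
  have hcardV2 : ∀ d : Fin (4*n*(4*B)),
      (partitionV n B x (.inr (.inl d))).card = 4*n*(4*B)^2 := by
    intro d
    refine Eq.trans (aux_card_eq' (partitionV n B x (.inr (.inl d))) (n*(B+1))
      (n*(B+1) + 4*n*(4*B)^2) (fun j => ?_) (le_refl _)) (by omega)
    simp only [partitionV, Finset.mem_filter, Finset.mem_univ, true_and]
    have := j.isLt
    omega
  have hKle : ∀ i, 4*n*(4*B+1)*(x i) ≤ n*(B+1) + 4*n*(4*B)^2 := by
    intro i
    have hA : 4*n*(4*B+1)*(2*(x i)) ≤ 4*n*(4*B+1)*B :=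
      Nat.mul_le_mul_left _ (le_of_lt (hub i))
    have e1 : 4*n*(4*B+1)*(2*(x i)) = 2*(4*n*(4*B+1)*(x i)) := by ring
    have e2 : 4*n*(4*B+1)*B = 16*(n*(B*B)) + 4*(n*B) := by ring
    have e3 : n*(B+1) = n*B + n := by ring
    have e4 : 4*n*(4*B)^2 = 64*(n*(B*B)) := by ring
    have e5 : n*B ≤ n*(B*B) := Nat.mul_le_mul_left _ (Nat.le_mul_of_pos_left B hB0)
    omega
  have hKoff : ∀ i, n*(B+1) ≤ 4*n*(4*B+1)*(x i) := by
    intro i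
    have h1 : n*(B+1) ≤ n*(4*(x i)) := Nat.mul_le_mul_left _ (by have := hlb i; omega)
    have h2 : (4*n)*(x i) ≤ (4*n*(4*B+1))*(x i) :=
      Nat.mul_le_mul_right _ (Nat.le_mul_of_pos_right _ (by omega))
    have e1 : n*(4*(x i)) = (4*n)*(x i) := by ring
    omega
  have hcardV3 : ∀ i, (partitionV n B x (.inr (.inr i))).card = 4*n*(4*B+1)*(x i) := by
    intro i
    refine Eq.trans (aux_card_eq' (partitionV n B x (.inr (.inr i))) 0
      (4*n*(4*B+1)*(x i)) (fun j => ?_) (hKle i)) (by omega)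
    simp only [partitionV, Finset.mem_filter, Finset.mem_univ, true_and]
    omega
  have hKpos : ∀ i, 0 < 4*n*(4*B+1)*(x i) := by
    intro i
    have h1 := hKoff i
    have h2 : 0 < n*(B+1) := Nat.mul_pos hn (by omega)
    omega
  constructor
  · -- from a contiguous proportional allocation to a 3-partition
    rintro ⟨o, hc, hprop⟩
    have hval : ∀ (a : Fin n ⊕ Fin (4*n*(4*B)) ⊕ Fin (3*n)) (P : ℕ → Prop) (c2 : ℕ),
        (∀ j : Fin (n*(B+1)+4*n*(4*B)^2), j ∈ partitionV n B x a ↔ P j.val) →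
        (partitionV n B x a).card = c2 → 0 < c2 →
        c2 ≤ cntf o a P * (4*n*(4*B)+4*n) := by
      intro a P c2 hm hc2 hpos2
      have h := hprop a
      rw [ge_iff_le, hcard] at h
      exact aux_prop_use (partitionV n B x) o a _ c2 _
        (fun sF hsF => cntf_eq_card o a P sF
          (fun j => (hsF j).trans (by rw [hm j]; tauto)))
        hc2 hpos2 (by omega) h
    have hn1 : ∀ s : Fin n, 1 ≤ cntf o (.inl s) (fun v => v = s.val*(B+1)) := by
      intro s
      have h := hval (.inl s) (fun v => v = s.val*(B+1)) 1
        (fun j => by simp only [partitionV, Finset.mem_filter, Finset.mem_univ, true_and])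
        (hcardV1 s) one_pos
      rcases Nat.eq_zero_or_pos (cntf o (.inl s) (fun v => v = s.val*(B+1))) with h0|h0
      · rw [h0, zero_mul] at h; omega
      · omega
    have hsplt : ∀ s : Fin n, s.val*(B+1) < n*(B+1) + 4*n*(4*B)^2 := by
      intro s; have := hsplan s; omega
    have hsp : ∀ s : Fin n, o ⟨s.val*(B+1), hsplt s⟩ = .inl s := by
      intro s
      obtain ⟨j, hj1, hj2⟩ := exists_of_cntf_pos (show 0 < cntf o (.inl s)
        (fun v => v = s.val*(B+1)) by have := hn1 s; omega)
      have hje : (⟨s.val*(B+1), hsplt s⟩ : Fin (n*(B+1) + 4*n*(4*B)^2)) = j :=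
        Fin.ext hj2.symm
      rw [hje]
      exact hj1
    have hd_lb : ∀ d, 4*B ≤ cntf o (.inr (.inl d)) (fun v => n*(B+1) ≤ v) := by
      intro d
      have h := hval (.inr (.inl d)) (fun v => n*(B+1) ≤ v) (4*n*(4*B)^2)
        (fun j => by simp only [partitionV, Finset.mem_filter, Finset.mem_univ, true_and])
        (hcardV2 d) hV2pos
      exact aux_dummy_lb hn hB0 h
    have hn_lb : ∀ i, x i ≤ cntf o (.inr (.inr i)) (fun v => v < 4*n*(4*B+1)*(x i)) := by
      intro i
      have h := hval (.inr (.inr i)) (fun v => v < 4*n*(4*B+1)*(x i)) (4*n*(4*B+1)*(x i))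
        (fun j => by simp only [partitionV, Finset.mem_filter, Finset.mem_univ, true_and])
        (hcardV3 i) (hKpos i)
      have h' : (x i)*(4*n*(4*B)+4*n)
          ≤ cntf o (.inr (.inr i)) (fun v => v < 4*n*(4*B+1)*(x i))
            * (4*n*(4*B)+4*n) := le_trans (le_of_eq (by ring)) h
      exact Nat.le_of_mul_le_mul_right h' (by omega)
    have hPdtot : ∑ a, cntf o a (fun v => n*(B+1) ≤ v) = 4*n*(4*B)^2 := by
      refine cntf_sum' o _ _ (fun sF hsF => ?_)
      refine Eq.trans (aux_card_eq' sF (n*(B+1)) (n*(B+1)+4*n*(4*B)^2)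
        (fun j => ?_) (le_refl _)) (by omega)
      rw [hsF j]
      have := j.isLt
      omega
    rw [Fintype.sum_sum_type, Fintype.sum_sum_type] at hPdtot
    have hS2 : (4*n*(4*B)) * (4*B) ≤ ∑ d : Fin (4*n*(4*B)),
        cntf o (.inr (.inl d)) (fun v => n*(B+1) ≤ v) := by
      have h := Finset.card_nsmul_le_sum Finset.univ
        (fun d : Fin (4*n*(4*B)) => cntf o (.inr (.inl d)) (fun v => n*(B+1) ≤ v)) (4*B)
        (fun d _ => hd_lb d)
      rwa [Finset.card_univ, Fintype.card_fin, smul_eq_mul] at h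
    have e_sq : 4*n*(4*B)^2 = (4*n*(4*B))*(4*B) := by ring
    have hz3 : ∀ i, cntf o (.inr (.inr i)) (fun v => n*(B+1) ≤ v) = 0 := by
      intro i
      have hzsum : ∑ i : Fin (3*n), cntf o (.inr (.inr i)) (fun v => n*(B+1) ≤ v) = 0 := by
        omega
      exact Finset.sum_eq_zero_iff.mp hzsum i (Finset.mem_univ i)
    have hn_lbL : ∀ i, x i ≤ cntf o (.inr (.inr i)) (fun v => v < n*(B+1)) := by
      intro i
      have hsp' := cntf_split o (.inr (.inr i)) (P := fun v => v < 4*n*(4*B+1)*(x i))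
        (Q := fun v => v < n*(B+1)) (R := fun v => n*(B+1) ≤ v) (fun v hv => by omega)
      have h1 := hn_lb i
      have h2 := hz3 i
      omega
    have hLtot : ∑ a, cntf o a (fun v => v < n*(B+1)) = n*(B+1) := by
      refine cntf_sum' o _ _ (fun sF hsF => ?_)
      refine Eq.trans (aux_card_eq' sF 0 (n*(B+1)) (fun j => ?_) hMle) (by omega)
      rw [hsF j]
      omega
    have hglb : ∀ a ∈ (Finset.univ : Finset (Fin n ⊕ Fin (4*n*(4*B)) ⊕ Fin (3*n))),
        Sum.elim (fun _ => 1) (Sum.elim (fun _ => 0) (fun i => x i)) a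
          ≤ cntf o a (fun v => v < n*(B+1)) := by
      rintro (s | d | i) -
      · simp only [Sum.elim_inl]
        have h1 := hn1 s
        have h2 : cntf o (.inl s) (fun v => v = s.val*(B+1))
            ≤ cntf o (.inl s) (fun v => v < n*(B+1)) :=
          cntf_mono o _ (fun v hv => by have := hsplan s; omega)
        omega
      · simp only [Sum.elim_inr, Sum.elim_inl]
        omega
      · simp only [Sum.elim_inr]
        exact hn_lbL i
    have hgsum : ∑ a : Fin n ⊕ Fin (4*n*(4*B)) ⊕ Fin (3*n),
        Sum.elim (fun _ => 1) (Sum.elim (fun _ => 0) (fun i => x i)) a = n*(B+1) := by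
      rw [Fintype.sum_sum_type, Fintype.sum_sum_type]
      simp only [Sum.elim_inl, Sum.elim_inr, Finset.sum_const, Finset.card_univ,
        Fintype.card_fin, smul_eq_mul, mul_one, mul_zero, zero_add]
      rw [hsum]
      ring
    have heqL := (Finset.sum_eq_sum_iff_of_le hglb).mp (hgsum.trans hLtot.symm)
    have hL1 : ∀ s : Fin n, cntf o (.inl s) (fun v => v < n*(B+1)) = 1 :=
      fun s => ((heqL (Sum.inl s) (Finset.mem_univ _)).symm : _)
    have hL2 : ∀ d, cntf o (.inr (.inl d)) (fun v => v < n*(B+1)) = 0 :=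
      fun d => ((heqL (Sum.inr (Sum.inl d)) (Finset.mem_univ _)).symm : _)
    have hL3 : ∀ i, cntf o (.inr (.inr i)) (fun v => v < n*(B+1)) = x i :=
      fun i => ((heqL (Sum.inr (Sum.inr i)) (Finset.mem_univ _)).symm : _)
    have hu1 : ∀ (s : Fin n) (j : Fin (n*(B+1)+4*n*(4*B)^2)),
        o j = .inl s → j.val < n*(B+1) → j.val = s.val*(B+1) := by
      intro s j hjo hjl
      have hju := cntf_unique (le_of_eq (hL1 s)) hjo hjl (hsp s)
        (show (⟨s.val*(B+1), hsplt s⟩ : Fin (n*(B+1)+4*n*(4*B)^2)).val < n*(B+1) by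
          show s.val*(B+1) < n*(B+1)
          have := hsplan s; omega)
      exact congrArg Fin.val hju
    have hud : ∀ (d) (j : Fin (n*(B+1)+4*n*(4*B)^2)),
        o j = .inr (.inl d) → n*(B+1) ≤ j.val := by
      intro d j hjo
      by_contra hlt
      have hp1 := cntf_pos_of (P := fun v => v < n*(B+1)) j hjo (by omega)
      have h0 := hL2 d
      omega
    have hnd : ∀ (i) (j : Fin (n*(B+1)+4*n*(4*B)^2)),
        o j = .inr (.inr i) → j.val < n*(B+1) := by
      intro i j hjo
      by_contra hge
      have hp1 := cntf_pos_of (P := fun v => n*(B+1) ≤ v) j hjo (by omega)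
      have h0 := hz3 i
      omega
    have hnm : ∀ (i) (j : Fin (n*(B+1)+4*n*(4*B)^2)),
        o j = .inr (.inr i) → j.val % (B+1) ≠ 0 := by
      intro i j hjo hmod
      have hjl := hnd i j hjo
      have hdlt : j.val/(B+1) < n := by
        rw [Nat.div_lt_iff_lt_mul (by omega)]; exact hjl
      have hdm := Nat.div_add_mod j.val (B+1)
      have hjval : j.val = (⟨j.val/(B+1), hdlt⟩ : Fin n).val*(B+1) := by
        have e : (B+1)*(j.val/(B+1)) = (j.val/(B+1))*(B+1) := mul_comm _ _
        simp only []
        omega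
      have hjeq : j = (⟨(⟨j.val/(B+1), hdlt⟩ : Fin n).val*(B+1),
          hsplt ⟨j.val/(B+1), hdlt⟩⟩ : Fin (n*(B+1)+4*n*(4*B)^2)) := Fin.ext hjval
      rw [hjeq, hsp ⟨j.val/(B+1), hdlt⟩] at hjo
      exact Sum.inl_ne_inr hjo
    have hblkaux : ∀ (i) (j j' : Fin (n*(B+1)+4*n*(4*B)^2)),
        o j = .inr (.inr i) → o j' = .inr (.inr i) →
        j.val ≤ j'.val → ¬ (j.val/(B+1) < j'.val/(B+1)) := by
      intro i j j' hj hj' hle hdlt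
      have hdm := Nat.div_add_mod j.val (B+1)
      have hmod := Nat.mod_lt j.val (y := B+1) (by omega)
      have e2 : (j.val/(B+1)+1)*(B+1) = (B+1)*(j.val/(B+1)) + (B+1) := by ring
      have h1 : (j.val/(B+1)+1)*(B+1) ≤ (j'.val/(B+1))*(B+1) :=
        Nat.mul_le_mul_right _ (by omega)
      have h2 : (j'.val/(B+1))*(B+1) ≤ j'.val := Nat.div_mul_le_self _ _
      have hmM : (j.val/(B+1)+1)*(B+1) < n*(B+1)+4*n*(4*B)^2 := by
        have := j'.isLt; omega
      have hml : j ≤ (⟨(j.val/(B+1)+1)*(B+1), hmM⟩ : Fin (n*(B+1)+4*n*(4*B)^2)) :=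
        Fin.le_def.mpr (by simp; omega)
      have hmr : (⟨(j.val/(B+1)+1)*(B+1), hmM⟩ : Fin (n*(B+1)+4*n*(4*B)^2)) ≤ j' :=
        Fin.le_def.mpr (by simp; omega)
      have ho := hc (.inr (.inr i)) j _ j' hml hmr hj hj'
      exact hnm i _ ho (Nat.mul_mod_left _ _)
    have hblk : ∀ (i) (j j' : Fin (n*(B+1)+4*n*(4*B)^2)),
        o j = .inr (.inr i) → o j' = .inr (.inr i) →
        j.val/(B+1) = j'.val/(B+1) := by
      intro i j j' hj hj'
      rcases le_total j.val j'.val with h|h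
      · have h1 := hblkaux i j j' hj hj' h
        have h2 : j.val/(B+1) ≤ j'.val/(B+1) := Nat.div_le_div_right h
        omega
      · have h1 := hblkaux i j' j hj' hj h
        have h2 : j'.val/(B+1) ≤ j.val/(B+1) := Nat.div_le_div_right h
        omega
    have hnex : ∀ i, ∃ j : Fin (n*(B+1)+4*n*(4*B)^2),
        o j = .inr (.inr i) ∧ j.val < n*(B+1) := by
      intro i
      refine exists_of_cntf_pos (P := fun v => v < n*(B+1)) ?_
      have h1 := hL3 i
      have h2 := hpos i
      omega
    choose w hw1 hw2 using hnex
    set p : Fin (3*n) → Fin n := fun i => ⟨(w i).val/(B+1), by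
      rw [Nat.div_lt_iff_lt_mul (by omega)]; exact hw2 i⟩ with hpdef
    have hpj : ∀ (i) (j : Fin (n*(B+1)+4*n*(4*B)^2)),
        o j = .inr (.inr i) → j.val/(B+1) = (p i).val := by
      intro i j hj
      have h := hblk i j (w i) hj (hw1 i)
      simp only [hpdef]
      exact h
    refine ⟨p, fun t => ?_⟩
    have hQsum : ∑ a, cntf o a
        (fun v => t.val*(B+1) < v ∧ v < t.val*(B+1)+(B+1)) = B := by
      refine cntf_sum' o _ _ (fun sF hsF => ?_)
      refine Eq.trans (aux_card_eq' sF (t.val*(B+1)+1) (t.val*(B+1)+(B+1))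
        (fun j => ?_) (by have := hsplan t; omega)) (by omega)
      rw [hsF j]
      omega
    rw [Fintype.sum_sum_type, Fintype.sum_sum_type] at hQsum
    have hz1' : ∀ s : Fin n, cntf o (.inl s)
        (fun v => t.val*(B+1) < v ∧ v < t.val*(B+1)+(B+1)) = 0 := by
      intro s
      rw [cntf_eq_zero_iff]
      rintro j hjo ⟨hP1, hP2⟩
      have hjl : j.val < n*(B+1) := by have := hsplan t; omega
      have hjv := hu1 s j hjo hjl
      rcases Nat.lt_or_ge s.val (t.val+1) with h|h
      · have h2 : s.val*(B+1) ≤ t.val*(B+1) := Nat.mul_le_mul_right _ (by omega)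
        omega
      · have h2 : (t.val+1)*(B+1) ≤ s.val*(B+1) := Nat.mul_le_mul_right _ h
        have e : (t.val+1)*(B+1) = t.val*(B+1)+(B+1) := by ring
        omega
    have hz2' : ∀ d, cntf o (.inr (.inl d))
        (fun v => t.val*(B+1) < v ∧ v < t.val*(B+1)+(B+1)) = 0 := by
      intro d
      rw [cntf_eq_zero_iff]
      rintro j hjo ⟨hP1, hP2⟩
      have h1 := hud d j hjo
      have := hsplan t
      omega
    have hz3' : ∀ i, cntf o (.inr (.inr i))
        (fun v => t.val*(B+1) < v ∧ v < t.val*(B+1)+(B+1))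
          = if p i = t then x i else 0 := by
      intro i
      by_cases hpt : p i = t
      · rw [if_pos hpt]
        have hpt' : (p i).val = t.val := congrArg Fin.val hpt
        have hcongr : cntf o (.inr (.inr i))
            (fun v => t.val*(B+1) < v ∧ v < t.val*(B+1)+(B+1))
            = cntf o (.inr (.inr i)) (fun v => v < n*(B+1)) := by
          refine cntf_congr o _ (fun j hjo => ?_)
          constructor
          · rintro ⟨h1', h2'⟩
            have := hsplan t; omega
          · intro hjl
            have hdiv : j.val/(B+1) = t.val := by rw [hpj i j hjo]; exact hpt'
            have hdm := Nat.div_add_mod j.val (B+1)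
            have hmodne := hnm i j hjo
            have hmlt := Nat.mod_lt j.val (y := B+1) (by omega)
            have e : (B+1)*(j.val/(B+1)) = t.val*(B+1) := by
              rw [hdiv, mul_comm]
            exact ⟨by omega, by omega⟩
        rw [hcongr]
        exact hL3 i
      · rw [if_neg hpt, cntf_eq_zero_iff]
        rintro j hjo ⟨h1, h2⟩
        apply hpt
        apply Fin.ext
        rw [← hpj i j hjo]
        refine Nat.div_eq_of_lt_le (by omega) ?_
        have e : (t.val+1)*(B+1) = t.val*(B+1)+(B+1) := by ring
        omega
    have hS1 : ∑ s : Fin n, cntf o (.inl s)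
        (fun v => t.val*(B+1) < v ∧ v < t.val*(B+1)+(B+1)) = 0 :=
      Finset.sum_eq_zero (fun s _ => hz1' s)
    have hS2' : ∑ d : Fin (4*n*(4*B)), cntf o (.inr (.inl d))
        (fun v => t.val*(B+1) < v ∧ v < t.val*(B+1)+(B+1)) = 0 :=
      Finset.sum_eq_zero (fun d _ => hz2' d)
    have hS3 : ∑ i : Fin (3*n), cntf o (.inr (.inr i))
        (fun v => t.val*(B+1) < v ∧ v < t.val*(B+1)+(B+1))
          = ∑ i ∈ Finset.univ.filter (fun i => p i = t), x i :=
      (Finset.sum_congr rfl (fun i _ => hz3' i)).trans (Finset.sum_filter _ _).symm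
    rw [hS1, hS2', hS3] at hQsum
    have hBsum : ∑ i ∈ Finset.univ.filter (fun i => p i = t), x i = B := by omega
    have h4B : (Finset.univ.filter (fun i => p i = t)).card * (B+1) ≤ 4*B := by
      have h := Finset.card_nsmul_le_sum (Finset.univ.filter (fun i => p i = t))
        (fun i => 4*(x i)) (B+1) (fun i _ => by show B+1 ≤ 4*(x i); have := hlb i; omega)
      rw [smul_eq_mul] at h
      have h2 : ∑ i ∈ Finset.univ.filter (fun i => p i = t), 4*(x i) = 4*B := by
        rw [← Finset.mul_sum, hBsum]
      omega
    have h2B : 2*B ≤ (Finset.univ.filter (fun i => p i = t)).card * (B-1) := by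
      have h := Finset.sum_le_sum (s := Finset.univ.filter (fun i => p i = t))
        (f := fun i => 2*(x i)) (g := fun _ => B-1)
        (fun i _ => by show 2*(x i) ≤ B-1; have := hub i; omega)
      rw [Finset.sum_const, smul_eq_mul] at h
      have h' : ∑ i ∈ Finset.univ.filter (fun i => p i = t), 2*(x i)
          ≤ (Finset.univ.filter (fun i => p i = t)).card * (B-1) := h
      have h2 : ∑ i ∈ Finset.univ.filter (fun i => p i = t), 2*(x i) = 2*B := by
        rw [← Finset.mul_sum, hBsum]
      omega
    have hc3 : (Finset.univ.filter (fun i => p i = t)).card = 3 := by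
      rcases Nat.lt_or_ge (Finset.univ.filter (fun i => p i = t)).card 3 with h|h
      · exfalso
        have h5 : (Finset.univ.filter (fun i => p i = t)).card * (B-1) ≤ 2*(B-1) :=
          Nat.mul_le_mul_right _ (by omega)
        omega
      rcases Nat.lt_or_ge (Finset.univ.filter (fun i => p i = t)).card 4 with h'|h'
      · omega
      · exfalso
        have h5 : 4*(B+1) ≤ (Finset.univ.filter (fun i => p i = t)).card * (B+1) :=
          Nat.mul_le_mul_right _ h'
        omega
    exact ⟨hc3, hBsum⟩
  · -- from a 3-partition to a contiguous proportional allocation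
    rintro ⟨p, hp⟩
    have hsum3 : ∀ t, ∑ i ∈ Finset.univ.filter (fun i => p i = t), x i = B :=
      fun t => (hp t).2
    have hex : ∀ (t : Fin n) (r : ℕ), 1 ≤ r → r ≤ B →
        ∃! i : Fin (3*n), p i = t ∧ lowf x p i < r ∧ r ≤ lowf x p i + x i :=
      fun t r h1 hr => aux_exu hsum3 t r h1 hr
    refine ⟨mkOwner n B x p hB0 hex, ?_, ?_⟩
    · rintro (s | d | i) t₁ t₂ t₃ h12 h23 ha1 ha3
      · rw [mkOwner_eq_inl] at ha1 ha3 ⊢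
        have h12' : t₁.val ≤ t₂.val := h12
        have h23' : t₂.val ≤ t₃.val := h23
        omega
      · rw [mkOwner_eq_dummy] at ha1 ha3 ⊢
        have h12' : t₁.val ≤ t₂.val := h12
        have h23' : t₂.val ≤ t₃.val := h23
        obtain ⟨hb1, hd1⟩ := ha1
        obtain ⟨hb3, hd3⟩ := ha3
        have m1 : (t₁.val - n*(B+1))/(4*B) ≤ (t₂.val - n*(B+1))/(4*B) :=
          Nat.div_le_div_right (by omega)
        have m2 : (t₂.val - n*(B+1))/(4*B) ≤ (t₃.val - n*(B+1))/(4*B) :=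
          Nat.div_le_div_right (by omega)
        exact ⟨by omega, by omega⟩
      · rw [mkOwner_eq_norm hsum3] at ha1 ha3 ⊢
        have h12' : t₁.val ≤ t₂.val := h12
        have h23' : t₂.val ≤ t₃.val := h23
        omega
    · intro a
      rw [ge_iff_le, hcard]
      rcases a with s | d | i
      · -- special agents
        refine aux_prop_show (partitionV n B x) (mkOwner n B x p hB0 hex) (.inl s)
          1 1 _ (fun sF hsF => ?_) (hcardV1 s) (by omega) (by omega) (by omega)
        refine Eq.trans (aux_card_eq' sF (s.val*(B+1)) (s.val*(B+1)+1)
          (fun j => (hsF j).trans ?_) (by have := hsplan s; omega)) (by omega)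
        simp only [partitionV, Finset.mem_filter, Finset.mem_univ, true_and]
        constructor
        · rintro ⟨h1, -⟩; omega
        · intro hb
          have hv : j.val = s.val*(B+1) := by omega
          exact ⟨hv, (mkOwner_eq_inl j s).mpr hv⟩
      · -- dummy agents
        have hdne : n*(B+1)+d.val*(4*B)+4*B ≤ n*(B+1)+4*n*(4*B)^2 := by
          have h1 : (d.val+1)*(4*B) ≤ (4*n*(4*B))*(4*B) :=
            Nat.mul_le_mul_right _ d.isLt
          have e1 : (d.val+1)*(4*B) = d.val*(4*B)+4*B := by ring
          have e2 : (4*n*(4*B))*(4*B) = 4*n*(4*B)^2 := by ring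
          omega
        refine aux_prop_show (partitionV n B x) (mkOwner n B x p hB0 hex) (.inr (.inl d))
          (4*B) (4*n*(4*B)^2) _ (fun sF hsF => ?_) (hcardV2 d) hV2pos (by omega) ?_
        · refine Eq.trans (aux_card_eq' sF (n*(B+1)+d.val*(4*B)) (n*(B+1)+d.val*(4*B)+4*B)
            (fun j => (hsF j).trans ?_) hdne) (by omega)
          simp only [partitionV, Finset.mem_filter, Finset.mem_univ, true_and]
          constructor
          · rintro ⟨hoff, ho⟩
            obtain ⟨-, hdiv⟩ := (mkOwner_eq_dummy j d).mp ho
            have hdm := Nat.div_add_mod (j.val - n*(B+1)) (4*B)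
            have hmlt := Nat.mod_lt (j.val - n*(B+1)) (y := 4*B) (by omega)
            have e : (4*B)*((j.val - n*(B+1))/(4*B)) = d.val*(4*B) := by
              rw [hdiv, mul_comm]
            omega
          · rintro ⟨h1, h2⟩
            refine ⟨by omega, (mkOwner_eq_dummy j d).mpr ⟨by omega, ?_⟩⟩
            refine Nat.div_eq_of_lt_le (by omega) ?_
            have e : (d.val+1)*(4*B) = d.val*(4*B)+4*B := by ring
            omega
        · have e2 : (4*B)*(4*n*(4*B)+4*n) = 4*n*(4*B)^2 + 16*(n*B) := by ring
          omega
      · -- normal agents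
        have hRn : (p i).val*(B+1) + (lowf x p i + x i) < n*(B+1) := by
          have hcum := aux_cum_le hsum3 i
          have h2 : ((p i).val+1)*(B+1) ≤ n*(B+1) := Nat.mul_le_mul_right _ (p i).isLt
          have e : ((p i).val+1)*(B+1) = (p i).val*(B+1)+(B+1) := by ring
          have := hpos i
          omega
        refine aux_prop_show (partitionV n B x) (mkOwner n B x p hB0 hex) (.inr (.inr i))
          (x i) (4*n*(4*B+1)*(x i)) _ (fun sF hsF => ?_) (hcardV3 i) (hKpos i)
          (by omega) ?_
        · refine Eq.trans (aux_card_eq' sF ((p i).val*(B+1)+1+lowf x p i)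
            ((p i).val*(B+1)+(lowf x p i + x i)+1)
            (fun j => (hsF j).trans ?_) (by omega)) (by omega)
          simp only [partitionV, Finset.mem_filter, Finset.mem_univ, true_and]
          constructor
          · rintro ⟨hv, ho⟩
            obtain ⟨h1, h2⟩ := (mkOwner_eq_norm hsum3 j i).mp ho
            exact ⟨h1, by omega⟩
          · rintro ⟨h1, h2⟩
            refine ⟨?_, (mkOwner_eq_norm hsum3 j i).mpr ⟨h1, by omega⟩⟩
            have := hKoff i
            omega
        · have e2 : (x i)*(4*n*(4*B)+4*n) = 4*n*(4*B+1)*(x i) := by ring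
          omega
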